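/- Let v be a valuation on a superring R. Then supp(v) is disjoint from A_v ∖ 𝔭_v, and supp(v) is the unique maximal element, under inclusion, among the two-sided ideals of R disjoint from A_v ∖ 𝔭_v; that is, every two-sided ideal I of R with I ∩ (A_v ∖ 𝔭_v) = ∅ satisfies I ⊆ supp(v). -/

import Mathlib

universe u

/-- A superring: a `ZMod 2`-graded ring `R = R₀ ⊕ R₁` which is supercommutative
(`R₀` is central and every odd element squares to zero). -/
structure IsSuperring {R : Type*} [Ring R] (𝒜 : ZMod 2 → AddSubgroup R) : Prop where
  one_mem : (1 : R) ∈ 𝒜 0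
  mul_mem : ∀ {i j : ZMod 2} {x y : R}, x ∈ 𝒜 i → y ∈ 𝒜 j → x * y ∈ 𝒜 (i + j)
  decompose : ∀ x : R, ∃ x0 ∈ 𝒜 0, ∃ x1 ∈ 𝒜 1, x = x0 + x1
  unique_decomp : ∀ x0 ∈ 𝒜 0, ∀ x1 ∈ 𝒜 1, x0 + x1 = 0 → x0 = 0 ∧ x1 = 0
  even_central : ∀ x ∈ 𝒜 0, ∀ y : R, x * y = y * x
  odd_sq : ∀ x ∈ 𝒜 1, x * x = 0

/-- A two-sided ideal of a (possibly noncommutative) ring, as a set. -/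
structure IsTwoSidedIdealSet {R : Type*} [Ring R] (I : Set R) : Prop where
  zero_mem : (0 : R) ∈ I
  add_mem : ∀ {x y : R}, x ∈ I → y ∈ I → x + y ∈ I
  neg_mem : ∀ {x : R}, x ∈ I → -x ∈ I
  mul_mem_left : ∀ (a : R) {x : R}, x ∈ I → a * x ∈ I
  mul_mem_right : ∀ {x : R} (a : R), x ∈ I → x * a ∈ I

/-- A (Manis) valuation on a ring `R`: a surjective map `v : R → Γ ∪ {∞}`
(`∞ = ⊤` is absorbing and greater than every element of the totally ordered
abelian group `Γ`) with `v 0 = ∞`, `v 1 = 0`, `v (x*y) = v x + v y` and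
`v (x+y) ≥ min (v x) (v y)`. -/
structure IsValuation {R : Type*} [Ring R] {Γ : Type*} [AddCommGroup Γ] [LinearOrder Γ] [IsOrderedAddMonoid Γ]
    (v : R → WithTop Γ) : Prop where
  surjective : Function.Surjective v
  map_zero : v 0 = ⊤
  map_one : v 1 = 0
  map_mul : ∀ x y : R, v (x * y) = v x + v y
  min_le_add : ∀ x y : R, min (v x) (v y) ≤ v (x + y)

/-- `A_v = {x : v x ≥ 0}`. -/
def valRing {R : Type*} [Ring R] {Γ : Type*} [AddCommGroup Γ] [LinearOrder Γ] [IsOrderedAddMonoid Γ]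
    (v : R → WithTop Γ) : Set R := {x : R | 0 ≤ v x}

/-- `𝔭_v = {x : v x > 0}`. -/
def valIdeal {R : Type*} [Ring R] {Γ : Type*} [AddCommGroup Γ] [LinearOrder Γ] [IsOrderedAddMonoid Γ]
    (v : R → WithTop Γ) : Set R := {x : R | 0 < v x}

/-- `supp v = v⁻¹(∞)`. -/
def valSupp {R : Type*} [Ring R] {Γ : Type*} [AddCommGroup Γ] [LinearOrder Γ] [IsOrderedAddMonoid Γ]
    (v : R → WithTop Γ) : Set R := {x : R | v x = ⊤}

/-- `supp v` is disjoint from `A_v ∖ 𝔭_v` and is the unique maximal such two-sided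
ideal: every two-sided ideal of `R` disjoint from `A_v ∖ 𝔭_v` lies in `supp v`. -/
theorem supp_maximal_ideal_avoiding {R : Type u} [Ring R] [Nontrivial R]
    (𝒜 : ZMod 2 → AddSubgroup R) (hR : IsSuperring 𝒜)
    {Γ : Type*} [AddCommGroup Γ] [LinearOrder Γ] [IsOrderedAddMonoid Γ]
    (v : R → WithTop Γ) (hv : IsValuation v) :
    valSupp v ∩ (valRing v \ valIdeal v) = ∅ ∧
      ∀ I : Set R, IsTwoSidedIdealSet I → I ∩ (valRing v \ valIdeal v) = ∅ →
        I ⊆ valSupp v := by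
  constructor
  · ext x
    simp only [Set.mem_inter_iff, Set.mem_diff, valSupp, valRing, valIdeal, Set.mem_setOf_eq,
      Set.mem_empty_iff_false, iff_false, not_and, not_not]
    intro h _
    rw [h]; exact lt_of_le_of_ne le_top (by simp)
  · intro I hI hdisj x hx
    by_contra hsupp
    obtain ⟨γ, hγ⟩ : ∃ γ : Γ, v x = (γ : WithTop Γ) := by
      cases hvx : v x with
      | top => exact absurd hvx hsupp
      | coe γ => exact ⟨γ, rfl⟩
    obtain ⟨y, hy⟩ := hv.surjective ((-γ : Γ) : WithTop Γ)
    have hxy : v (x * y) = 0 := by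
      rw [hv.map_mul, hγ, hy, ← WithTop.coe_add, add_neg_cancel, WithTop.coe_zero]
    have : x * y ∈ I ∩ (valRing v \ valIdeal v) := by
      refine ⟨hI.mul_mem_right y hx, ?_, ?_⟩
      · simp [valRing, hxy]
      · simp [valIdeal, hxy]
    rw [hdisj] at this
    exact this
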